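/- Let χ be a multiplicative character of F_q of odd order k > 1, let D^c be the complement in F_q^* of the SLCE set D. Then Σ_{y ∈ D^c} χ(y) = (1/2)·χ(-1)·(K(χ) + 1), where K(χ) = χ(4)J(χ,χ). -/

import Mathlib

open Finset

/-- In a finite field of odd characteristic whose unit group is generated by `α`,
the nonzero non-squares are exactly the odd powers of `α`. -/
lemma slce_aux_odd_pow_iff (F : Type*) [Field F] [Fintype F] [DecidableEq F]
    (hF : ringChar F ≠ 2) (α : F)
    (hα : ∀ x : F, x ≠ 0 → ∃ n : ℕ, α ^ n = x) (z : F) :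
    (∃ i : ℕ, z = α ^ (2 * i + 1)) ↔ z ≠ 0 ∧ ¬ IsSquare z := by
  have h2 : (2 : F) ≠ 0 := Ring.two_ne_zero hF
  have hα0 : α ≠ 0 := by
    rintro rfl
    obtain ⟨n, hn⟩ := hα 2 h2
    rcases Nat.eq_zero_or_pos n with rfl | hn'
    · rw [pow_zero] at hn
      exact zero_ne_one (α := F) (by linear_combination hn)
    · rw [zero_pow hn'.ne'] at hn
      exact h2 hn.symm
  set u : Fˣ := Units.mk0 α hα0 with hu
  have hgen : ∀ x : Fˣ, x ∈ Subgroup.zpowers u := by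
    intro x
    obtain ⟨n, hn⟩ := hα (x : F) x.ne_zero
    refine ⟨(n : ℤ), ?_⟩
    show u ^ (n : ℤ) = x
    rw [zpow_natCast]
    exact Units.ext (by simpa [hu, Units.val_pow_eq_pow_val, Units.val_mk0] using hn)
  have hord : orderOf u = Fintype.card F - 1 := by
    rw [orderOf_eq_card_of_forall_mem_zpowers hgen, Nat.card_eq_fintype_card,
      Fintype.card_units]
  have hcard : Fintype.card F % 2 = 1 := FiniteField.odd_card_of_char_ne_two hF
  have heven : 2 ∣ orderOf u := by
    rw [hord]
    omega
  constructor
  · rintro ⟨i, rfl⟩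
    refine ⟨pow_ne_zero _ hα0, ?_⟩
    rintro ⟨b, hb⟩
    have hb0 : b ≠ 0 := by
      intro h
      exact pow_ne_zero (2 * i + 1) hα0 (by rw [hb, h, mul_zero])
    obtain ⟨m, hm⟩ := hα b hb0
    have hpow : u ^ (2 * i + 1) = u ^ (2 * m) := by
      ext
      simp only [hu, Units.val_pow_eq_pow_val, Units.val_mk0]
      rw [hb, ← hm, two_mul, pow_add]
    have hmod : (2 * i + 1) ≡ 2 * m [MOD orderOf u] := pow_eq_pow_iff_modEq.mp hpow
    have := (hmod.of_dvd heven)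
    simp only [Nat.ModEq] at this
    omega
  · rintro ⟨hz, hsq⟩
    obtain ⟨n, rfl⟩ := hα z hz
    rcases Nat.even_or_odd n with ⟨j, hj⟩ | ⟨j, hj⟩
    · exact absurd ⟨α ^ j, by rw [← pow_add, ← hj]⟩ hsq
    · exact ⟨j, by rw [hj]⟩

/-- The classical identity `χ(4) J(χ,χ) = J(χ,η)` with `η` the quadratic character. -/
lemma slce_aux_jacobi (F : Type*) [Field F] [Fintype F] [DecidableEq F]
    (hF : ringChar F ≠ 2) (χ : MulChar F ℂ) (hχ : χ ≠ 1) :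
    χ 4 * jacobiSum χ χ =
      jacobiSum χ ((quadraticChar F).ringHomComp (Int.castRingHom ℂ)) := by
  have h2 : (2 : F) ≠ 0 := Ring.two_ne_zero hF
  set η : MulChar F ℂ := (quadraticChar F).ringHomComp (Int.castRingHom ℂ) with hη
  -- Step 1: χ 4 * J(χ,χ) = ∑ u, χ (1 - u^2)
  have he : Function.Bijective (fun x : F => 2 * x - 1) := by
    constructor
    · intro a b hab
      simp only at hab
      have : (2 : F) * a = 2 * b := by linear_combination hab
      exact mul_left_cancel₀ h2 this
    · intro v
      exact ⟨(v + 1) / 2, by field_simp; ring⟩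
  have step1 : χ 4 * jacobiSum χ χ = ∑ v : F, χ (1 - v ^ 2) := by
    rw [jacobiSum, Finset.mul_sum]
    refine Fintype.sum_bijective _ he _ _ fun x => ?_
    rw [← map_mul, ← map_mul]
    congr 1
    ring
  -- Step 2: ∑ v, χ (1 - v^2) = J(χ, η), by grouping over t = v^2.
  have step2 : (∑ v : F, χ (1 - v ^ 2)) = jacobiSum χ η := by
    rw [← Finset.sum_fiberwise univ (fun v : F => v ^ 2) (fun v => χ (1 - v ^ 2))]
    have hfiber : ∀ t : F,
        (∑ v ∈ univ.filter (fun v : F => v ^ 2 = t), χ (1 - v ^ 2)) =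
          ((quadraticChar F t : ℂ) + 1) * χ (1 - t) := by
      intro t
      rw [Finset.sum_congr rfl (fun v hv => ?_)]
      · rw [Finset.sum_const, nsmul_eq_mul]
        congr 1
        have hcardeq : (univ.filter (fun v : F => v ^ 2 = t)) =
            {x : F | x ^ 2 = t}.toFinset := by
          ext v; simp
        rw [hcardeq]
        have := quadraticChar_card_sqrts hF t
        exact_mod_cast congrArg (Int.cast : ℤ → ℂ) this
      · rw [(Finset.mem_filter.mp hv).2]
    rw [Finset.sum_congr rfl (fun t _ => hfiber t)]
    have hsplit : (∑ t : F, ((quadraticChar F t : ℂ) + 1) * χ (1 - t)) =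
        (∑ t : F, η t * χ (1 - t)) + ∑ t : F, χ (1 - t) := by
      rw [← Finset.sum_add_distrib]
      refine Finset.sum_congr rfl fun t _ => ?_
      simp only [hη, MulChar.ringHomComp_apply, Int.coe_castRingHom]
      ring
    rw [hsplit]
    have hzero : (∑ t : F, χ (1 - t)) = 0 := by
      have hb : Function.Bijective (fun t : F => 1 - t) := by
        constructor
        · intro a b hab
          simp only at hab
          linear_combination -hab
        · intro v; exact ⟨1 - v, by ring⟩
      rw [Fintype.sum_bijective _ hb _ (fun t => χ t) fun t => rfl]
      exact MulChar.sum_eq_zero_of_ne_one hχ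
    rw [hzero, add_zero, jacobiSum_comm]
    rfl
  rw [step1, step2]

theorem slce_stmt_6 (F : Type*) [Field F] [Fintype F] [DecidableEq F]
    (hF : ringChar F ≠ 2) (α : F)
    (hα : ∀ x : F, x ≠ 0 → ∃ n : ℕ, α ^ n = x)
    (χ : MulChar F ℂ) (hk : Odd (orderOf χ)) (hk1 : 1 < orderOf χ)
    (D : Set F) [DecidablePred (· ∈ D)]
    (hD : D = {y : F | y ≠ 0 ∧ ∃ i : ℕ, y = α ^ (2 * i + 1) - 1}) :
    ∑ y ∈ Finset.univ.filter (fun y : F => y ≠ 0 ∧ y ∉ D), χ y =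
      (1 / 2 : ℂ) * χ (-1) * (χ 4 * jacobiSum χ χ + 1) := by
  classical
  have hχ1 : χ ≠ 1 := by
    intro h
    rw [h, orderOf_one] at hk1
    exact absurd hk1 (lt_irrefl 1)
  set η : MulChar F ℂ := (quadraticChar F).ringHomComp (Int.castRingHom ℂ) with hη
  have hχ0 : χ (0 : F) = 0 := χ.map_nonunit (by simp)
  have hη0 : η (0 : F) = 0 := η.map_nonunit (by simp)
  -- characterize the complement of D
  have hmem : ∀ y : F, (y ≠ 0 ∧ y ∉ D) ↔ (y ≠ 0 ∧ IsSquare (y + 1)) := by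
    intro y
    have hiff := slce_aux_odd_pow_iff F hF α hα (y + 1)
    constructor
    · rintro ⟨hy0, hyD⟩
      refine ⟨hy0, ?_⟩
      by_contra hsq
      by_cases hy1 : y + 1 = 0
      · exact hsq (by rw [hy1]; exact IsSquare.zero)
      · obtain ⟨i, hi⟩ := hiff.mpr ⟨hy1, hsq⟩
        exact hyD (by rw [hD]; exact ⟨hy0, i, by rw [← hi]; ring⟩)
    · rintro ⟨hy0, hsq⟩
      refine ⟨hy0, fun hyD => ?_⟩
      rw [hD] at hyD
      obtain ⟨-, i, hi⟩ := hyD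
      have : y + 1 = α ^ (2 * i + 1) := by rw [hi]; ring
      exact (hiff.mp ⟨i, this⟩).2 hsq
  have hfilter_eq : (univ.filter (fun y : F => y ≠ 0 ∧ y ∉ D)) =
      univ.filter (fun y : F => y ≠ 0 ∧ IsSquare (y + 1)) := by
    ext y; simp only [mem_filter, mem_univ, true_and]; exact hmem y
  rw [hfilter_eq]
  -- drop the condition y ≠ 0 (since χ 0 = 0)
  have hdrop : (∑ y ∈ univ.filter (fun y : F => y ≠ 0 ∧ IsSquare (y + 1)), χ y) =
      ∑ y ∈ univ.filter (fun y : F => IsSquare (y + 1)), χ y := by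
    refine Finset.sum_subset ?_ ?_
    · intro y hy
      simp only [mem_filter, mem_univ, true_and] at hy ⊢
      exact hy.2
    · intro y hy hy'
      simp only [mem_filter, mem_univ, true_and] at hy hy'
      have : y = 0 := by
        by_contra h
        exact hy' ⟨h, hy⟩
      rw [this, hχ0]
  rw [hdrop]
  -- split off y = -1
  have hinsert : (univ.filter (fun y : F => IsSquare (y + 1))) =
      insert (-1 : F) (univ.filter (fun y : F => y ≠ -1 ∧ IsSquare (y + 1))) := by
    ext y
    simp only [mem_insert, mem_filter, mem_univ, true_and]
    constructor
    · intro h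
      by_cases hy : y = -1
      · exact Or.inl hy
      · exact Or.inr ⟨hy, h⟩
    · rintro (rfl | ⟨-, h⟩)
      · rw [neg_add_cancel]; exact IsSquare.zero
      · exact h
  have hnotmem : (-1 : F) ∉ univ.filter (fun y : F => y ≠ -1 ∧ IsSquare (y + 1)) := by
    simp
  rw [hinsert, Finset.sum_insert hnotmem]
  -- rewrite the remaining sum using the quadratic character
  have hswitch : (∑ y ∈ univ.filter (fun y : F => y ≠ -1 ∧ IsSquare (y + 1)), χ y) =
      ∑ y ∈ univ.filter (fun y : F => y ≠ -1), χ y * (1 + η (y + 1)) / 2 := by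
    have : (univ.filter (fun y : F => y ≠ -1 ∧ IsSquare (y + 1))) =
        (univ.filter (fun y : F => y ≠ -1)).filter (fun y => IsSquare (y + 1)) := by
      ext y; simp [and_assoc]
    rw [this, Finset.sum_filter]
    refine Finset.sum_congr rfl fun y hy => ?_
    simp only [mem_filter, mem_univ, true_and] at hy
    have hy1 : y + 1 ≠ 0 := fun h => hy (by linear_combination h)
    by_cases hsq : IsSquare (y + 1)
    · rw [if_pos hsq]
      have : η (y + 1) = 1 := by
        rw [hη, MulChar.ringHomComp_apply, (quadraticChar_one_iff_isSquare hy1).mpr hsq]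
        norm_num
      rw [this]; ring
    · rw [if_neg hsq]
      have : η (y + 1) = -1 := by
        rw [hη, MulChar.ringHomComp_apply, quadraticChar_neg_one_iff_not_isSquare.mpr hsq]
        norm_num
      rw [this]; ring
  rw [hswitch]
  -- compute the two pieces
  have hfe : (univ.filter (fun y : F => y ≠ -1)) = univ.erase (-1 : F) := by
    ext y; simp [Finset.mem_erase]
  have hsum1 : (∑ y ∈ univ.filter (fun y : F => y ≠ -1), χ y) = -χ (-1) := by
    have h := Finset.sum_erase_add univ (fun y => χ y) (mem_univ (-1 : F))
    rw [MulChar.sum_eq_zero_of_ne_one hχ1] at h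
    rw [hfe]
    exact eq_neg_of_add_eq_zero_left h
  have hsum2 : (∑ y ∈ univ.filter (fun y : F => y ≠ -1), χ y * η (y + 1)) =
      χ (-1) * jacobiSum χ η := by
    rw [hfe, Finset.sum_erase _ (by rw [neg_add_cancel, hη0, mul_zero])]
    have hb : Function.Bijective (fun x : F => -x) := neg_involutive.bijective
    rw [← Fintype.sum_bijective _ hb (fun x => χ (-1) * (χ x * η (1 - x)))
      (fun y => χ y * η (y + 1)) (fun x => ?_)]
    · rw [← Finset.mul_sum]; rfl
    · show χ (-1) * (χ x * η (1 - x)) = χ (-x) * η (-x + 1)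
      rw [← mul_assoc, ← map_mul χ]
      congr 1
      · congr 1; ring
      · congr 1; ring
  have hdistrib : (∑ y ∈ univ.filter (fun y : F => y ≠ -1), χ y * (1 + η (y + 1)) / 2) =
      ((∑ y ∈ univ.filter (fun y : F => y ≠ -1), χ y) +
        (∑ y ∈ univ.filter (fun y : F => y ≠ -1), χ y * η (y + 1))) / 2 := by
    rw [← Finset.sum_add_distrib, ← Finset.sum_div]
    refine congrArg (· / 2) (Finset.sum_congr rfl fun y _ => ?_)
    ring
  rw [hdistrib, hsum1, hsum2, ← slce_aux_jacobi F hF χ hχ1]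
  ring
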